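/- arXiv:2603.02381 — 3 statements merged into one kernel-verified Lean document; each statement's English description precedes it below -/
import Mathlib

section
/- Let p ≥ 2 and ℓ≥1. For all ξ, η ∈ ℂ^ℓ one has C_p(ξ,η) ≥ c₁(p)|η|^p, where c₁(p) := inf over (s,t)∈ℝ²∖{(0,0)} of ([t² + s² + 2s + 1]^{p/2} − 1 − ps)/([t² + s²]^{p/2}). Moreover c₁(p) ∈ (0,1]. -/
open Real Complex

noncomputable section

/-- The `C_p`-functional on `ℂ^ℓ`:
`C_p(ξ,η) = |ξ|^p − |ξ−η|^p − p|ξ−η|^{p−2} Re⟨ξ−η, η⟩`.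
(When `ξ = η` the last term vanishes automatically since `Re⟨0,η⟩ = 0`.) -/
def Cp (p : ℝ) {ℓ : ℕ} (ξ η : EuclideanSpace ℂ (Fin ℓ)) : ℝ :=
  ‖ξ‖ ^ p - ‖ξ - η‖ ^ p - p * ‖ξ - η‖ ^ (p - 2) * (inner ℂ (ξ - η) η : ℂ).re

end

/-- The constant `c₁(p)`, as an infimum over `(s,t) ∈ ℝ² ∖ {(0,0)}`. -/
noncomputable def c1 (p : ℝ) : ℝ :=
  sInf {r : ℝ | ∃ s t : ℝ, (s, t) ≠ (0, 0) ∧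
    r = ((t ^ 2 + s ^ 2 + 2 * s + 1) ^ (p / 2) - 1 - p * s) / (t ^ 2 + s ^ 2) ^ (p / 2)}

/-- superadditivity of rpow -/
lemma rpow_superadd {q x y : ℝ} (hq : 1 ≤ q) (hx : 0 ≤ x) (hy : 0 ≤ y) :
    x ^ q + y ^ q ≤ (x + y) ^ q := by
  have hq0 : q ≠ 0 := by linarith
  have hxy : 0 ≤ x + y := by linarith
  have hx' : x ^ q ≤ x * (x + y) ^ (q - 1) := by
    calc x ^ q = x ^ (1 + (q - 1)) := by ring_nf
    _ = x ^ (1:ℝ) * x ^ (q - 1) := Real.rpow_add' hx (by simpa using hq0)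
    _ ≤ x * (x + y) ^ (q - 1) := by
        rw [Real.rpow_one]
        exact mul_le_mul_of_nonneg_left
          (Real.rpow_le_rpow hx (by linarith) (by linarith)) hx
  have hy' : y ^ q ≤ y * (x + y) ^ (q - 1) := by
    calc y ^ q = y ^ (1 + (q - 1)) := by ring_nf
    _ = y ^ (1:ℝ) * y ^ (q - 1) := Real.rpow_add' hy (by simpa using hq0)
    _ ≤ y * (x + y) ^ (q - 1) := by
        rw [Real.rpow_one]
        exact mul_le_mul_of_nonneg_left
          (Real.rpow_le_rpow hy (by linarith) (by linarith)) hy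
  calc x ^ q + y ^ q ≤ (x + y) * (x + y) ^ (q - 1) := by linarith [hx', hy']
  _ = (x + y) ^ (1 + (q-1)) := by
      rw [Real.rpow_add' hxy (by simpa using hq0), Real.rpow_one]
  _ = (x + y) ^ q := by ring_nf

lemma sq_rpow_half (x p : ℝ) (hx : 0 ≤ x) : (x ^ 2) ^ (p / 2) = x ^ p := by
  rw [← Real.rpow_natCast x 2, ← Real.rpow_mul hx]
  congr 1; ring

/-- The key 2D inequality. -/
lemma keyIneq (p : ℝ) (hp : 2 ≤ p) (s t : ℝ) :
    1 + p * s + 2 ^ (1 - p) * (s ^ 2 + t ^ 2) ^ (p / 2)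
      ≤ (t ^ 2 + s ^ 2 + 2 * s + 1) ^ (p / 2) := by
  have hq : (1:ℝ) ≤ p / 2 := by linarith
  have hq0 : (0:ℝ) ≤ p / 2 := by linarith
  set q := p / 2 with hqdef
  set M : ℝ := (1 + s/2) ^ 2 + (t/2) ^ 2 with hMdef
  set D : ℝ := (s ^ 2 + t ^ 2) / 4 with hDdef
  set X : ℝ := t ^ 2 + s ^ 2 + 2 * s + 1 with hXdef
  have hM0 : 0 ≤ M := by positivity
  have hD0 : 0 ≤ D := by positivity
  have hX0 : 0 ≤ X := by nlinarith [sq_nonneg (1 + s), sq_nonneg t]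
  have hMD : M + D = (X + 1) / 2 := by rw [hMdef, hDdef, hXdef]; ring
  have h1 : M ^ q + D ^ q ≤ ((X + 1) / 2) ^ q := by
    rw [← hMD]; exact rpow_superadd hq hM0 hD0
  have h2 : ((X + 1) / 2) ^ q ≤ (X ^ q + 1) / 2 := by
    have := (convexOn_rpow hq).2 (Set.mem_Ici.2 hX0) (Set.mem_Ici.2 (zero_le_one))
      (by norm_num : (0:ℝ) ≤ (1:ℝ)/2) (by norm_num : (0:ℝ) ≤ (1:ℝ)/2) (by norm_num)
    simp only [smul_eq_mul, Real.one_rpow] at this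
    calc ((X + 1) / 2) ^ q = (1/2 * X + 1/2 * 1) ^ q := by ring_nf
    _ ≤ 1/2 * X ^ q + 1/2 * 1 := this
    _ = (X ^ q + 1) / 2 := by ring
  -- step 3 : 1 + p * (s/2) ≤ M ^ q
  have h3 : 1 + p * (s / 2) ≤ M ^ q := by
    have hb : ((1 + s/2) ^ 2) ^ q ≤ M ^ q :=
      Real.rpow_le_rpow (by positivity) (by nlinarith [sq_nonneg (t/2)]) hq0
    have habs : ((1 + s/2) ^ 2) ^ q = |1 + s/2| ^ p := by
      rw [← _root_.sq_abs, ← Real.rpow_natCast |1 + s/2| 2, ← Real.rpow_mul (abs_nonneg _)]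
      rw [hqdef]; ring_nf
    by_cases hs : -2 ≤ s
    · have hber : 1 + p * (s/2) ≤ (1 + s/2) ^ p :=
        one_add_mul_self_le_rpow_one_add (by linarith) (by linarith)
      have : (1 + s/2) ^ p ≤ |1 + s/2| ^ p :=
        Real.rpow_le_rpow (by linarith) (le_abs_self _) (by linarith)
      calc 1 + p * (s/2) ≤ |1 + s/2| ^ p := by linarith
      _ = ((1 + s/2) ^ 2) ^ q := habs.symm
      _ ≤ M ^ q := hb
    · push_neg at hs
      have h0 : 1 + p * (s/2) ≤ 0 := by nlinarith
      calc 1 + p * (s/2) ≤ 0 := h0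
      _ ≤ M ^ q := Real.rpow_nonneg hM0 q
  have h4 : D ^ q = (s ^ 2 + t ^ 2) ^ q / 2 ^ p := by
    rw [hDdef, Real.div_rpow (by positivity) (by norm_num)]
    congr 1
    rw [show (4:ℝ) = 2 ^ (2:ℕ) by norm_num, ← Real.rpow_natCast 2 2,
      ← Real.rpow_mul (by norm_num : (0:ℝ) ≤ 2)]
    rw [hqdef]; ring_nf
  have h5 : (2:ℝ) ^ (1 - p) = 2 / 2 ^ p := by
    rw [Real.rpow_sub (by norm_num : (0:ℝ) < 2), Real.rpow_one]
  have h2p : (0:ℝ) < 2 ^ p := Real.rpow_pos_of_pos (by norm_num) p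
  have : 1 + p * s + 2 ^ (1-p) * (s^2+t^2) ^ q ≤ X ^ q := by
    have e : 2 ^ (1-p) * (s^2+t^2) ^ q = 2 * D ^ q := by
      rw [h4, h5]; field_simp
    nlinarith [h1, h2, h3]
  exact this

def c1Set (p : ℝ) : Set ℝ :=
  {r : ℝ | ∃ s t : ℝ, (s, t) ≠ (0, 0) ∧
    r = ((t ^ 2 + s ^ 2 + 2 * s + 1) ^ (p / 2) - 1 - p * s) / (t ^ 2 + s ^ 2) ^ (p / 2)}

lemma c1_eq (p : ℝ) : c1 p = sInf (c1Set p) := rfl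

lemma c1Set_lb (p : ℝ) (hp : 2 ≤ p) : ∀ r ∈ c1Set p, 2 ^ (1 - p) ≤ r := by
  rintro r ⟨s, t, hne, rfl⟩
  have hst : 0 < s ^ 2 + t ^ 2 := by
    rcases lt_or_eq_of_le (by positivity : (0:ℝ) ≤ s ^ 2 + t ^ 2) with h | h
    · exact h
    · exfalso; apply hne
      have hs : s = 0 := by nlinarith [sq_nonneg s, sq_nonneg t]
      have ht : t = 0 := by nlinarith [sq_nonneg s, sq_nonneg t]
      simp [hs, ht]
  have hden : 0 < (t ^ 2 + s ^ 2) ^ (p / 2) := Real.rpow_pos_of_pos (by linarith) _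
  rw [le_div_iff₀ hden]
  have := keyIneq p hp s t
  have e : (t ^ 2 + s ^ 2) = (s ^ 2 + t ^ 2) := by ring
  rw [← e] at this; linarith

lemma two_mul_le_two_rpow (p : ℝ) (hp : 2 ≤ p) : 2 * p ≤ 2 ^ p := by
  have h1 : (2:ℝ) ^ p = 2 ^ (p - 2) * 2 ^ (2:ℝ) := by
    rw [← Real.rpow_add (by norm_num : (0:ℝ) < 2)]; ring_nf
  have h2 : (2:ℝ) ^ (2:ℝ) = 4 := by
    rw [show (2:ℝ) = ((2:ℕ):ℝ) by norm_num, Real.rpow_natCast]; norm_num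
  have h3 : 1 + (p - 2) * Real.log 2 ≤ 2 ^ (p - 2) := by
    rw [Real.rpow_def_of_pos (by norm_num : (0:ℝ) < 2)]
    have := Real.add_one_le_exp (Real.log 2 * (p - 2))
    linarith
  have hlog : (1:ℝ)/2 ≤ Real.log 2 := by
    have := Real.log_two_gt_d9; linarith
  have h4 : p / 2 ≤ 2 ^ (p - 2) := by nlinarith
  nlinarith

lemma elt_mem (p : ℝ) (hp : 2 ≤ p) : 2 * p / 2 ^ p ∈ c1Set p := by
  refine ⟨-2, 0, by norm_num, ?_⟩
  have h1 : ((0:ℝ) ^ 2 + (-2:ℝ) ^ 2 + 2 * (-2) + 1) = 1 := by norm_num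
  have h2 : ((0:ℝ) ^ 2 + (-2:ℝ) ^ 2) = 2 ^ (2:ℕ) := by norm_num
  rw [h1, h2, Real.one_rpow, ← Real.rpow_natCast 2 2,
    ← Real.rpow_mul (by norm_num : (0:ℝ) ≤ 2)]
  norm_num
  ring_nf

lemma c1_pos_le (p : ℝ) (hp : 2 ≤ p) : 2 ^ (1 - p) ≤ c1 p ∧ c1 p ≤ 1 := by
  have hne : (c1Set p).Nonempty := ⟨_, elt_mem p hp⟩
  have hbdd : BddBelow (c1Set p) := ⟨2 ^ (1 - p), fun r hr => c1Set_lb p hp r hr⟩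
  constructor
  · rw [c1_eq]; exact le_csInf hne (c1Set_lb p hp)
  · rw [c1_eq]
    have h1 : sInf (c1Set p) ≤ 2 * p / 2 ^ p := csInf_le hbdd (elt_mem p hp)
    have h2 : (0:ℝ) < 2 ^ p := Real.rpow_pos_of_pos (by norm_num) p
    have h3 : 2 * p / 2 ^ p ≤ 1 := by
      rw [div_le_one h2]
      exact two_mul_le_two_rpow p hp
    linarith


/-- For `p ≥ 2` and `ℓ ≥ 1`, `C_p(ξ,η) ≥ c₁(p)|η|^p` for all `ξ, η ∈ ℂ^ℓ`,
and `c₁(p) ∈ (0, 1]`. -/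
theorem Cp_lower_bound_c1 (p : ℝ) (hp : 2 ≤ p) (ℓ : ℕ) (hℓ : 1 ≤ ℓ) :
    (∀ ξ η : EuclideanSpace ℂ (Fin ℓ), c1 p * ‖η‖ ^ p ≤ Cp p ξ η) ∧
      c1 p ∈ Set.Ioc (0 : ℝ) 1 := by
  obtain ⟨hlb, hub⟩ := c1_pos_le p hp
  have h2p : (0:ℝ) < 2 ^ (1 - p) := Real.rpow_pos_of_pos (by norm_num) _
  have hc1pos : 0 < c1 p := lt_of_lt_of_le h2p hlb
  have hp0 : p ≠ 0 := by linarith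
  refine ⟨?_, hc1pos, hub⟩
  intro ξ η
  by_cases hη : η = 0
  · subst hη
    simp [Cp, Real.zero_rpow hp0, inner_zero_right]
  by_cases hξη : ξ - η = 0
  · have hξ : ξ = η := sub_eq_zero.mp hξη
    have hCp : Cp p ξ η = ‖η‖ ^ p := by
      simp only [Cp, hξ, sub_self, inner_zero_left, norm_zero, Real.zero_rpow hp0,
        Complex.zero_re, mul_zero, sub_zero]
    rw [hCp]
    nlinarith [Real.rpow_nonneg (norm_nonneg η) p]
  · -- main case
    have hc : 0 < ‖ξ - η‖ := norm_pos_iff.mpr hξη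
    have hηn : 0 < ‖η‖ := norm_pos_iff.mpr hη
    set c : ℝ := ‖ξ - η‖ with hcdef
    set R : ℝ := (inner ℂ (ξ - η) η : ℂ).re with hRdef
    set s : ℝ := R / c ^ 2 with hsdef
    have hCS : R ^ 2 ≤ c ^ 2 * ‖η‖ ^ 2 := by
      have h1 : |R| ≤ ‖(inner ℂ (ξ - η) η : ℂ)‖ := by
        exact Complex.abs_re_le_norm _
      have h2 : ‖(inner ℂ (ξ - η) η : ℂ)‖ ≤ c * ‖η‖ := norm_inner_le_norm _ _
      nlinarith [abs_nonneg R, _root_.sq_abs R]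
    have hs2 : s ^ 2 ≤ ‖η‖ ^ 2 / c ^ 2 := by
      rw [hsdef, div_pow, div_le_div_iff₀ (by positivity) (by positivity)]
      nlinarith
    set t : ℝ := Real.sqrt (‖η‖ ^ 2 / c ^ 2 - s ^ 2) with htdef
    have ht2 : t ^ 2 = ‖η‖ ^ 2 / c ^ 2 - s ^ 2 := Real.sq_sqrt (by linarith)
    have hst : t ^ 2 + s ^ 2 = ‖η‖ ^ 2 / c ^ 2 := by rw [ht2]; ring
    have hξsum : ξ = (ξ - η) + η := by abel
    have hnormadd : ‖ξ‖ ^ 2 = c ^ 2 + 2 * R + ‖η‖ ^ 2 := by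
      conv_lhs => rw [hξsum]
      rw [norm_add_sq (𝕜 := ℂ)]
      simp [hRdef, hcdef, RCLike.re_to_complex]
      rw [inner_sub_left, Complex.sub_re, inner_self_eq_norm_sq_to_K]
      rfl
    have hc2 : (c:ℝ) ^ 2 ≠ 0 := by positivity
    have hX : t ^ 2 + s ^ 2 + 2 * s + 1 = ‖ξ‖ ^ 2 / c ^ 2 := by
      rw [ht2, hnormadd, hsdef]; field_simp; ring
    have hne2 : (s, t) ≠ (0, 0) := by
      intro h
      rw [Prod.mk.injEq] at h
      obtain ⟨h1, h2⟩ := h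
      rw [h1, h2] at hst
      have : (0:ℝ) < ‖η‖ ^ 2 / c ^ 2 := by positivity
      simp at hst
      nlinarith
    have hbdd : BddBelow (c1Set p) := ⟨2 ^ (1 - p), fun r hr => c1Set_lb p hp r hr⟩
    have hmem : ((t ^ 2 + s ^ 2 + 2 * s + 1) ^ (p / 2) - 1 - p * s) / (t ^ 2 + s ^ 2) ^ (p / 2)
        ∈ c1Set p := ⟨s, t, hne2, rfl⟩
    have hr : c1 p ≤ ((t ^ 2 + s ^ 2 + 2 * s + 1) ^ (p / 2) - 1 - p * s)
        / (t ^ 2 + s ^ 2) ^ (p / 2) := by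
      rw [c1_eq]; exact csInf_le hbdd hmem
    have hcp : 0 < c ^ p := Real.rpow_pos_of_pos hc p
    have hηp : 0 < ‖η‖ ^ p := Real.rpow_pos_of_pos hηn p
    have hA : (t ^ 2 + s ^ 2 + 2 * s + 1) ^ (p / 2) = ‖ξ‖ ^ p / c ^ p := by
      rw [hX, Real.div_rpow (by positivity) (by positivity),
        sq_rpow_half _ _ (norm_nonneg ξ), sq_rpow_half _ _ hc.le]
    have hB : (t ^ 2 + s ^ 2) ^ (p / 2) = ‖η‖ ^ p / c ^ p := by
      rw [hst, Real.div_rpow (by positivity) (by positivity),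
        sq_rpow_half _ _ (norm_nonneg η), sq_rpow_half _ _ hc.le]
    have hRs : R = s * c ^ 2 := by rw [hsdef]; field_simp
    have hcc : c ^ (p - 2) * c ^ 2 = c ^ p := by
      rw [← Real.rpow_natCast c 2, ← Real.rpow_add hc]
      congr 1; push_cast; ring
    have hCp : Cp p ξ η = ‖ξ‖ ^ p - c ^ p - p * s * c ^ p := by
      show ‖ξ‖ ^ p - c ^ p - p * c ^ (p - 2) * R = _
      rw [hRs, ← hcc]; ring
    have hfin : ((t ^ 2 + s ^ 2 + 2 * s + 1) ^ (p / 2) - 1 - p * s)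
        / (t ^ 2 + s ^ 2) ^ (p / 2) * ‖η‖ ^ p = Cp p ξ η := by
      rw [hA, hB, hCp]
      field_simp
    calc c1 p * ‖η‖ ^ p
        ≤ ((t ^ 2 + s ^ 2 + 2 * s + 1) ^ (p / 2) - 1 - p * s)
            / (t ^ 2 + s ^ 2) ^ (p / 2) * ‖η‖ ^ p :=
          mul_le_mul_of_nonneg_right hr hηp.le
      _ = Cp p ξ η := hfin
end

section
/- Let 1<p<2 and ℓ≥2. For all ξ, η ∈ ℂ^ℓ with (ξ,η) such that |ξ|+|ξ−η|>0 one has C_p(ξ,η) ≥ c₂(p)·|η|²/(|ξ|+|ξ−η|)^{2−p}, where c₂(p) := inf over (s,t)∈ℝ² with s²+t²>0 of ((t² + s² + 2s + 1)^{p/2} − 1 − ps)/((√(t² + s² + 2s + 1) + 1)^{p−2}(t² + s²)). Moreover c₂(p) ∈ (0, p(p−1)/2^{p−1}]. -/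
open Real Complex

/-- The constant `c₂(p)`, as an infimum over `(s,t) ∈ ℝ²` with `s² + t² > 0`. -/
noncomputable def c2 (p : ℝ) : ℝ :=
  sInf {r : ℝ | ∃ s t : ℝ, 0 < s ^ 2 + t ^ 2 ∧
    r = ((t ^ 2 + s ^ 2 + 2 * s + 1) ^ (p / 2) - 1 - p * s) /
      ((Real.sqrt (t ^ 2 + s ^ 2 + 2 * s + 1) + 1) ^ (p - 2) * (t ^ 2 + s ^ 2))}

lemma mvt_ratio (p : ℝ) (hp1 : 1 < p) (hp2 : p < 2) (B a b : ℝ) (ha : 0 ≤ a) (hab : a < b) :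
    ∃ c ∈ Set.Ioo a b,
      ((B - b) ^ 2 - (B - a) ^ 2) * (-(p * (p - 1) * c ^ (p - 2) * (B - c))) =
      ((B ^ p - b ^ p - p * b ^ (p - 1) * (B - b)) -
        (B ^ p - a ^ p - p * a ^ (p - 1) * (B - a))) * (-(2 * (B - c))) := by
  have hcont : ∀ q : ℝ, 0 < q → ContinuousOn (fun x : ℝ => x ^ q) (Set.Icc a b) := by
    intro q hq x hx
    exact (Real.continuousAt_rpow_const x q (Or.inr hq.le)).continuousWithinAt
  have hfc : ContinuousOn (fun x : ℝ => B ^ p - x ^ p - p * x ^ (p - 1) * (B - x))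
      (Set.Icc a b) := by
    refine (continuousOn_const.sub (hcont p (by linarith))).sub ?_
    exact ((continuousOn_const.mul (hcont (p - 1) (by linarith))).mul
      (continuousOn_const.sub continuousOn_id))
  have hgc : ContinuousOn (fun x : ℝ => (B - x) ^ 2) (Set.Icc a b) := by fun_prop
  have hff' : ∀ x ∈ Set.Ioo a b,
      HasDerivAt (fun x : ℝ => B ^ p - x ^ p - p * x ^ (p - 1) * (B - x))
        (-(p * (p - 1) * x ^ (p - 2) * (B - x))) x := by
    intro x hx
    have hx0 : x ≠ 0 := by have := hx.1; intro h; subst h; exact absurd this (not_lt.mpr ha)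
    have h1 : HasDerivAt (fun x : ℝ => x ^ p) (p * x ^ (p - 1)) x :=
      Real.hasDerivAt_rpow_const (Or.inl hx0)
    have h2 : HasDerivAt (fun x : ℝ => x ^ (p - 1)) ((p - 1) * x ^ (p - 1 - 1)) x :=
      Real.hasDerivAt_rpow_const (Or.inl hx0)
    have h3 : HasDerivAt (fun x : ℝ => B - x) (-1) x := (hasDerivAt_id x).const_sub B
    have h4 := ((h2.const_mul p).mul h3)
    have h5 := (h1.const_sub (B ^ p)).sub h4
    refine h5.congr_deriv ?_
    have : p - 1 - 1 = p - 2 := by ring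
    rw [this]; ring
  have hgg' : ∀ x ∈ Set.Ioo a b,
      HasDerivAt (fun x : ℝ => (B - x) ^ 2) (-(2 * (B - x))) x := by
    intro x hx
    have h3 : HasDerivAt (fun x : ℝ => B - x) (-1) x := (hasDerivAt_id x).const_sub B
    have := h3.pow 2
    exact this.congr_deriv (by norm_num)
  exact exists_ratio_hasDerivAt_eq_ratio_slope _ _ hab hfc hff' _ _ hgc hgg'

lemma one_var_ineq (p : ℝ) (hp1 : 1 < p) (hp2 : p < 2) (B : ℝ) (hB : 0 ≤ B) :
    p * (p - 1) / 2 * (1 + B) ^ (p - 2) * (B - 1) ^ 2 ≤ B ^ p - 1 - p * (B - 1) := by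
  have key : ∃ c : ℝ, (0 < c ∧ c < 1 + B) ∧
      (B ^ p - 1 - p * (B - 1) = p * (p - 1) / 2 * c ^ (p - 2) * (B - 1) ^ 2) ∨
      B = 1 := by
    rcases lt_trichotomy B 1 with h | h | h
    · obtain ⟨c, hc, heq⟩ := mvt_ratio p hp1 hp2 B B 1 hB h
      refine ⟨c, Or.inl ⟨⟨lt_of_le_of_lt hB hc.1, by nlinarith [hc.2]⟩, ?_⟩⟩
      have hd : B - c ≠ 0 := by have := hc.1; intro hh; nlinarith
      simp only [Real.one_rpow, sub_self, mul_zero, Real.rpow_natCast] at heq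
      have h2 : (B ^ p - 1 - p * (B - 1) - p * (p - 1) / 2 * c ^ (p - 2) * (B - 1) ^ 2)
          * (2 * (B - c)) = 0 := by nlinarith [heq]
      have h3 := mul_eq_zero.mp h2
      rcases h3 with h3 | h3
      · linarith [h3]
      · exact absurd h3 (by intro hh; apply hd; linarith)
    · exact ⟨1, Or.inr h⟩
    · obtain ⟨c, hc, heq⟩ := mvt_ratio p hp1 hp2 B 1 B (by norm_num) h
      refine ⟨c, Or.inl ⟨⟨by linarith [hc.1], by nlinarith [hc.2]⟩, ?_⟩⟩
      have hd : B - c ≠ 0 := by have := hc.2; intro hh; nlinarith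
      simp only [Real.one_rpow, sub_self, mul_zero, Real.rpow_natCast] at heq
      have h2 : (B ^ p - 1 - p * (B - 1) - p * (p - 1) / 2 * c ^ (p - 2) * (B - 1) ^ 2)
          * (2 * (B - c)) = 0 := by nlinarith [heq]
      have h3 := mul_eq_zero.mp h2
      rcases h3 with h3 | h3
      · linarith [h3]
      · exact absurd h3 (by intro hh; apply hd; linarith)
  obtain ⟨c, hcase⟩ := key
  rcases hcase with ⟨⟨hc0, hc1⟩, heq⟩ | hB1
  · rw [heq]
    have hmono : (1 + B) ^ (p - 2) ≤ c ^ (p - 2) :=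
      Real.rpow_le_rpow_of_nonpos hc0 hc1.le (by linarith)
    have hnn : 0 ≤ p * (p - 1) / 2 := by nlinarith
    have := mul_le_mul_of_nonneg_right (mul_le_mul_of_nonneg_left hmono hnn) (sq_nonneg (B - 1))
    linarith
  · subst hB1; norm_num

lemma key2D (p : ℝ) (hp1 : 1 < p) (hp2 : p < 2) (s t : ℝ) :
    p * (p - 1) / 2 *
        ((Real.sqrt (t ^ 2 + s ^ 2 + 2 * s + 1) + 1) ^ (p - 2) * (t ^ 2 + s ^ 2)) ≤
      (t ^ 2 + s ^ 2 + 2 * s + 1) ^ (p / 2) - 1 - p * s := by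
  set u : ℝ := t ^ 2 + s ^ 2 + 2 * s + 1 with hu_def
  have hu : 0 ≤ u := by nlinarith [sq_nonneg (s + 1), sq_nonneg t]
  set B : ℝ := Real.sqrt u with hB_def
  have hB : 0 ≤ B := Real.sqrt_nonneg u
  have hB2 : B ^ 2 = u := Real.sq_sqrt hu
  have hupow : u ^ (p / 2) = B ^ p := by
    rw [hB_def, Real.sqrt_eq_rpow, ← Real.rpow_mul hu]
    ring_nf
  have hs : s ≤ B - 1 := by nlinarith [sq_nonneg (s + 1 - B)]
  have hst : t ^ 2 + s ^ 2 = B ^ 2 - 2 * s - 1 := by rw [hB2]; ring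
  have hK1 : (B + 1) ^ (p - 2) ≤ 1 :=
    Real.rpow_le_one_of_one_le_of_nonpos (by linarith) (by linarith)
  have hK0 : 0 < (B + 1) ^ (p - 2) := Real.rpow_pos_of_pos (by linarith) _
  have h1 := one_var_ineq p hp1 hp2 B hB
  have h2 : 0 ≤ (B - 1 - s) * (p - 2 * (p * (p - 1) / 2) * ((B + 1) ^ (p - 2))) := by
    apply mul_nonneg (by linarith)
    have hpp : (0:ℝ) ≤ p * (p - 1) := by nlinarith
    nlinarith [mul_le_mul_of_nonneg_left hK1 hpp]
  rw [hupow, hst]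
  have hcm : (1 + B) ^ (p - 2) = (B + 1) ^ (p - 2) := by rw [add_comm]
  rw [hcm] at h1
  nlinarith [h1, h2]

lemma c2_lb (p : ℝ) (hp1 : 1 < p) (hp2 : p < 2) : ∀ r ∈ {r : ℝ | ∃ s t : ℝ, 0 < s ^ 2 + t ^ 2 ∧
    r = ((t ^ 2 + s ^ 2 + 2 * s + 1) ^ (p / 2) - 1 - p * s) /
      ((Real.sqrt (t ^ 2 + s ^ 2 + 2 * s + 1) + 1) ^ (p - 2) * (t ^ 2 + s ^ 2))},
    p * (p - 1) / 2 ≤ r := by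
  rintro r ⟨s, t, hst, rfl⟩
  have hK : 0 < (Real.sqrt (t ^ 2 + s ^ 2 + 2 * s + 1) + 1) ^ (p - 2) :=
    Real.rpow_pos_of_pos (by positivity) _
  have hD : 0 < (Real.sqrt (t ^ 2 + s ^ 2 + 2 * s + 1) + 1) ^ (p - 2) * (t ^ 2 + s ^ 2) := by
    apply mul_pos hK; nlinarith
  rw [le_div_iff₀ hD]
  have := key2D p hp1 hp2 s t
  nlinarith [this]

lemma c2_mem (p : ℝ) : ((0:ℝ) ^ (p / 2) - 1 - p * (-1)) / ((Real.sqrt 0 + 1) ^ (p - 2) * 1)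
    ∈ {r : ℝ | ∃ s t : ℝ, 0 < s ^ 2 + t ^ 2 ∧
    r = ((t ^ 2 + s ^ 2 + 2 * s + 1) ^ (p / 2) - 1 - p * s) /
      ((Real.sqrt (t ^ 2 + s ^ 2 + 2 * s + 1) + 1) ^ (p - 2) * (t ^ 2 + s ^ 2))} := by
  refine ⟨-1, 0, by norm_num, by norm_num⟩

lemma c2_ge (p : ℝ) (hp1 : 1 < p) (hp2 : p < 2) : p * (p - 1) / 2 ≤ c2 p := by
  apply le_csInf ⟨_, c2_mem p⟩ (c2_lb p hp1 hp2)

lemma c2_bdd (p : ℝ) (hp1 : 1 < p) (hp2 : p < 2) : BddBelow {r : ℝ | ∃ s t : ℝ, 0 < s ^ 2 + t ^ 2 ∧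
    r = ((t ^ 2 + s ^ 2 + 2 * s + 1) ^ (p / 2) - 1 - p * s) /
      ((Real.sqrt (t ^ 2 + s ^ 2 + 2 * s + 1) + 1) ^ (p - 2) * (t ^ 2 + s ^ 2))} :=
  ⟨_, c2_lb p hp1 hp2⟩

lemma c2_le (p : ℝ) (hp1 : 1 < p) (hp2 : p < 2) : c2 p ≤ p - 1 := by
  have h := csInf_le (c2_bdd p hp1 hp2) (c2_mem p)
  have hval : ((0:ℝ) ^ (p / 2) - 1 - p * (-1)) / ((Real.sqrt 0 + 1) ^ (p - 2) * 1) = p - 1 := by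
    rw [Real.zero_rpow (by intro h; nlinarith [h]), Real.sqrt_zero, zero_add, Real.one_rpow]
    ring
  rw [hval] at h
  exact h

lemma two_rpow_le (p : ℝ) (hp1 : 1 < p) (hp2 : p < 2) : (2:ℝ) ^ (p - 1) ≤ p := by
  have hconv := convexOn_exp.2 (Set.mem_univ (0:ℝ)) (Set.mem_univ (Real.log 2))
    (by linarith : (0:ℝ) ≤ 2 - p) (by linarith : (0:ℝ) ≤ p - 1) (by ring)
  simp only [smul_eq_mul, mul_zero, zero_add, Real.exp_zero, Real.exp_log (by norm_num : (0:ℝ) < 2)] at hconv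
  rw [Real.rpow_def_of_pos (by norm_num : (0:ℝ) < 2)]
  calc Real.exp (Real.log 2 * (p - 1)) = Real.exp ((p - 1) * Real.log 2) := by ring_nf
    _ ≤ (2 - p) * 1 + (p - 1) * 2 := hconv
    _ = p := by ring

lemma c2_le' (p : ℝ) (hp1 : 1 < p) (hp2 : p < 2) : c2 p ≤ p * (p - 1) / 2 ^ (p - 1) := by
  have h2 : (0:ℝ) < (2:ℝ) ^ (p - 1) := Real.rpow_pos_of_pos (by norm_num) _
  have := two_rpow_le p hp1 hp2
  rw [le_div_iff₀ h2]
  have := c2_le p hp1 hp2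
  nlinarith [mul_le_mul_of_nonneg_left (two_rpow_le p hp1 hp2) (show (0:ℝ) ≤ p - 1 by linarith)]

theorem main_ineq (p : ℝ) (hp1 : 1 < p) (hp2 : p < 2) (ℓ : ℕ)
    (ξ η : EuclideanSpace ℂ (Fin ℓ)) (h : 0 < ‖ξ‖ + ‖ξ - η‖) :
    c2 p * ‖η‖ ^ 2 / (‖ξ‖ + ‖ξ - η‖) ^ (2 - p) ≤ Cp p ξ η := by
  have hc2pos : 0 < c2 p := lt_of_lt_of_le (by nlinarith) (c2_ge p hp1 hp2)
  by_cases hη : η = 0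
  · subst hη
    simp [Cp, Real.zero_rpow (by linarith : p ≠ 0)]
  by_cases hζ : ξ - η = 0
  · obtain rfl : ξ = η := sub_eq_zero.mp hζ
    have hpos : 0 < ‖ξ‖ := by simpa using h
    have hCp : Cp p ξ ξ = ‖ξ‖ ^ p := by
      simp [Cp, Real.zero_rpow (by linarith : p ≠ 0)]
    rw [hCp, sub_self, norm_zero, add_zero]
    have hkey : ‖ξ‖ ^ (2:ℕ) / ‖ξ‖ ^ (2 - p) = ‖ξ‖ ^ p := by
      rw [← Real.rpow_natCast ‖ξ‖ 2, ← Real.rpow_sub hpos]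
      norm_num
    rw [mul_div_assoc, hkey]
    have hc2le1 : c2 p ≤ 1 := le_trans (c2_le p hp1 hp2) (by linarith)
    nlinarith [Real.rpow_nonneg hpos.le p]
  · -- main case
    have hL0 : 0 < ‖ξ - η‖ := norm_pos_iff.mpr hζ
    set L : ℝ := ‖ξ - η‖ with hL
    set R : ℝ := (inner ℂ (ξ - η) η : ℂ).re with hR
    set s : ℝ := R / L ^ 2 with hs
    have hCS : R ^ 2 ≤ L ^ 2 * ‖η‖ ^ 2 := by
      have h1 : |R| ≤ L * ‖η‖ := by
        calc |R| ≤ ‖(inner ℂ (ξ - η) η : ℂ)‖ := Complex.abs_re_le_norm _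
          _ = ‖(inner ℂ (ξ - η) η : ℂ)‖ := rfl
          _ ≤ L * ‖η‖ := norm_inner_le_norm _ _
      nlinarith [abs_nonneg R, _root_.sq_abs R]
    have hs2 : s ^ 2 ≤ ‖η‖ ^ 2 / L ^ 2 := by
      rw [hs, div_pow, div_le_div_iff₀ (by positivity) (by positivity)]
      nlinarith [hCS, sq_nonneg L]
    set t : ℝ := Real.sqrt (‖η‖ ^ 2 / L ^ 2 - s ^ 2) with ht
    have ht2 : t ^ 2 = ‖η‖ ^ 2 / L ^ 2 - s ^ 2 := Real.sq_sqrt (by linarith)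
    have hst_eq : s ^ 2 + t ^ 2 = ‖η‖ ^ 2 / L ^ 2 := by rw [ht2]; ring
    have hηpos : 0 < ‖η‖ := norm_pos_iff.mpr hη
    have hst_pos : 0 < s ^ 2 + t ^ 2 := by rw [hst_eq]; positivity
    have hRs : R = s * L ^ 2 := by rw [hs]; field_simp
    -- norm identity
    have hξn : ‖ξ‖ ^ 2 = L ^ 2 + 2 * R + ‖η‖ ^ 2 := by
      have := norm_add_sq (𝕜 := ℂ) (ξ - η) η
      rw [sub_add_cancel] at this
      exact this
    set u : ℝ := t ^ 2 + s ^ 2 + 2 * s + 1 with hu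
    have hueq : u = ‖ξ‖ ^ 2 / L ^ 2 := by
      rw [hu, ht2, hξn, hRs]; field_simp; ring
    have hu0 : 0 ≤ u := by rw [hueq]; positivity
    have hsqrtu : Real.sqrt u = ‖ξ‖ / L := by
      rw [hueq]
      rw [show ‖ξ‖ ^ 2 / L ^ 2 = (‖ξ‖ / L) ^ 2 by ring]
      exact Real.sqrt_sq (by positivity)
    have hξL : ‖ξ‖ = L * Real.sqrt u := by
      rw [hsqrtu]; field_simp
    have hsq_nonneg : 0 ≤ Real.sqrt u := Real.sqrt_nonneg u
    -- membership
    have hmem : ((t ^ 2 + s ^ 2 + 2 * s + 1) ^ (p / 2) - 1 - p * s) /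
        ((Real.sqrt (t ^ 2 + s ^ 2 + 2 * s + 1) + 1) ^ (p - 2) * (t ^ 2 + s ^ 2)) ∈
        {r : ℝ | ∃ s t : ℝ, 0 < s ^ 2 + t ^ 2 ∧
          r = ((t ^ 2 + s ^ 2 + 2 * s + 1) ^ (p / 2) - 1 - p * s) /
          ((Real.sqrt (t ^ 2 + s ^ 2 + 2 * s + 1) + 1) ^ (p - 2) * (t ^ 2 + s ^ 2))} :=
      ⟨s, t, hst_pos, rfl⟩
    have hc2r := csInf_le (c2_bdd p hp1 hp2) hmem
    rw [← hu] at hc2r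
    have hDpos : 0 < (Real.sqrt u + 1) ^ (p - 2) * (t ^ 2 + s ^ 2) := by
      apply mul_pos (Real.rpow_pos_of_pos (by linarith) _)
      nlinarith [hst_pos]
    rw [le_div_iff₀ hDpos] at hc2r
    -- identity A
    have hA : Cp p ξ η = L ^ p * (u ^ (p / 2) - 1 - p * s) := by
      have h1 : ‖ξ‖ ^ p = L ^ p * u ^ (p / 2) := by
        rw [hξL, Real.mul_rpow hL0.le hsq_nonneg, Real.sqrt_eq_rpow, ← Real.rpow_mul hu0]
        ring_nf
      have h2 : L ^ (p - 2) * L ^ (2:ℕ) = L ^ p := by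
        rw [← Real.rpow_natCast L 2, ← Real.rpow_add hL0]
        norm_num
      rw [Cp, h1, ← hL, ← hR, hRs]
      linear_combination (-(p * s)) * h2
    -- identity B
    have hB : c2 p * ‖η‖ ^ 2 / (‖ξ‖ + L) ^ (2 - p) =
        L ^ p * (c2 p * ((Real.sqrt u + 1) ^ (p - 2) * (t ^ 2 + s ^ 2))) := by
      have hb1 : (‖ξ‖ + L) ^ (2 - p) = L ^ (2 - p) * (Real.sqrt u + 1) ^ (2 - p) := by
        rw [hξL, show L * Real.sqrt u + L = L * (Real.sqrt u + 1) by ring,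
          Real.mul_rpow hL0.le (by linarith)]
      have hb2 : L ^ (2:ℕ) = L ^ p * L ^ (2 - p) := by
        rw [← Real.rpow_natCast L 2, ← Real.rpow_add hL0]
        norm_num
      have hb3 : (Real.sqrt u + 1) ^ (p - 2) * (Real.sqrt u + 1) ^ (2 - p) = 1 := by
        rw [← Real.rpow_add (by linarith)]
        norm_num
      have hη2 : ‖η‖ ^ (2:ℕ) = L ^ (2:ℕ) * (t ^ 2 + s ^ 2) := by
        have : s ^ 2 + t ^ 2 = ‖η‖ ^ 2 / L ^ 2 := hst_eq
        field_simp at this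
        linarith [this]
      rw [hb1, hη2, hb2]
      have hd1 : L ^ (2 - p) ≠ 0 := ne_of_gt (Real.rpow_pos_of_pos hL0 _)
      have hd2 : (Real.sqrt u + 1) ^ (2 - p) ≠ 0 :=
        ne_of_gt (Real.rpow_pos_of_pos (by linarith) _)
      rw [div_eq_iff (mul_ne_zero hd1 hd2)]
      linear_combination (-(c2 p * L ^ p * L ^ (2 - p) * (t ^ 2 + s ^ 2))) * hb3
    rw [hB, hA]
    have hLp : 0 ≤ L ^ p := (Real.rpow_pos_of_pos hL0 p).le
    exact mul_le_mul_of_nonneg_left hc2r hLp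

/-- For `1 < p < 2` and `ℓ ≥ 2`, for all `ξ, η ∈ ℂ^ℓ` with `|ξ| + |ξ−η| > 0`,
`C_p(ξ,η) ≥ c₂(p)|η|²/(|ξ|+|ξ−η|)^{2−p}`, and `c₂(p) ∈ (0, p(p−1)/2^{p−1}]`. -/
theorem Cp_lower_bound_c2 (p : ℝ) (hp1 : 1 < p) (hp2 : p < 2) (ℓ : ℕ) (hℓ : 2 ≤ ℓ) :
    (∀ ξ η : EuclideanSpace ℂ (Fin ℓ), 0 < ‖ξ‖ + ‖ξ - η‖ →
      c2 p * ‖η‖ ^ 2 / (‖ξ‖ + ‖ξ - η‖) ^ (2 - p) ≤ Cp p ξ η) ∧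
      c2 p ∈ Set.Ioc (0 : ℝ) (p * (p - 1) / 2 ^ (p - 1)) := by
  have hpos : 0 < c2 p := lt_of_lt_of_le (by nlinarith) (c2_ge p hp1 hp2)
  exact ⟨fun ξ η h => main_ineq p hp1 hp2 ℓ ξ η h, hpos, c2_le' p hp1 hp2⟩
end

section
/- Let 1<p<∞ and ℓ≥2. For ξ, η ∈ ℂ^ℓ one has C_p(ξ,η) = 0 if and only if η = 0. -/
open Real Complex

/-- Tangent line inequality for `x ↦ x^p`, strict version. -/
lemma tangent_lt (p s t : ℝ) (hp : 1 < p) (hs : 0 ≤ s) (ht : 0 < t) (hst : s ≠ t) :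
    t ^ p + p * t ^ (p - 1) * (s - t) < s ^ p := by
  have hu1 : -1 ≤ s / t - 1 := by
    have : 0 ≤ s / t := div_nonneg hs ht.le
    linarith
  have hu0 : s / t - 1 ≠ 0 := by
    intro h
    apply hst
    field_simp at h
    linarith
  have hb := one_add_mul_self_lt_rpow_one_add hu1 hu0 hp
  have htp : (0:ℝ) < t ^ p := Real.rpow_pos_of_pos ht p
  have key : (1 + p * (s / t - 1)) * t ^ p < s ^ p := by
    have h2 : (1 + (s / t - 1)) ^ p * t ^ p = s ^ p := by
      have h0 : (0:ℝ) ≤ 1 + (s / t - 1) := by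
        have : 0 ≤ s / t := div_nonneg hs ht.le
        linarith
      rw [← Real.mul_rpow h0 ht.le]
      congr 1
      field_simp
      ring
    calc (1 + p * (s / t - 1)) * t ^ p < (1 + (s / t - 1)) ^ p * t ^ p := by
          exact mul_lt_mul_of_pos_right hb htp
      _ = s ^ p := h2
  have hts : t ^ p = t ^ (p - 1) * t := by
    rw [← Real.rpow_add_one ht.ne']
    congr 1
    ring
  have : (1 + p * (s / t - 1)) * t ^ p = t ^ p + p * t ^ (p - 1) * (s - t) := by
    rw [hts]
    field_simp
  linarith [key, this.symm.trans_lt key]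

lemma tangent_le (p s t : ℝ) (hp : 1 < p) (hs : 0 ≤ s) (ht : 0 < t) :
    t ^ p + p * t ^ (p - 1) * (s - t) ≤ s ^ p := by
  rcases eq_or_ne s t with rfl | h
  · simp
  · exact (tangent_lt p s t hp hs ht h).le

/-- For `1 < p < ∞` and `ℓ ≥ 2`, `C_p(ξ,η) = 0` iff `η = 0`. -/
theorem Cp_eq_zero_iff (p : ℝ) (hp : 1 < p) (ℓ : ℕ) (hℓ : 2 ≤ ℓ)
    (ξ η : EuclideanSpace ℂ (Fin ℓ)) :
    Cp p ξ η = 0 ↔ η = 0 := by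
  constructor
  · intro h
    set a := ξ - η with ha
    have hηa : η = ξ - a := by rw [ha]; abel
    by_cases hta : a = 0
    · -- ξ - η = 0
      have hr : (inner ℂ a η : ℂ).re = 0 := by simp [hta]
      have : ‖ξ‖ ^ p = 0 := by
        have hpne : p ≠ 0 := by positivity
        have h' := h
        unfold Cp at h'
        rw [← ha, hta] at h'
        simp only [norm_zero, Real.zero_rpow hpne, inner_zero_left, map_zero,
          Complex.zero_re, mul_zero, sub_zero] at h'
        linarith
      have hξ : ξ = 0 := by
        have := Real.rpow_eq_zero_iff_of_nonneg (norm_nonneg ξ) |>.mp this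
        exact norm_eq_zero.mp this.1
      rw [hηa, hξ, hta, sub_zero]
    · -- a ≠ 0
      have ht : 0 < ‖a‖ := norm_pos_iff.mpr hta
      set s := ‖ξ‖ with hs
      set t := ‖a‖ with htdef
      have hs0 : 0 ≤ s := norm_nonneg _
      have hCp : s ^ p - t ^ p - p * t ^ (p - 2) * (inner ℂ a η : ℂ).re = 0 := by
        unfold Cp at h; rw [← ha] at h; exact h
      -- inner ℂ a η = inner ℂ a ξ - ‖a‖²
      have hinner : (inner ℂ a η : ℂ).re = (inner ℂ a ξ : ℂ).re - t ^ 2 := by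
        have : (inner ℂ a η : ℂ) = inner ℂ a ξ - inner ℂ a a := by
          rw [hηa, inner_sub_right]
        have h2 : (inner ℂ a a : ℂ).re = t ^ 2 := inner_self_eq_norm_sq (𝕜 := ℂ) a
        rw [this, Complex.sub_re, h2]
      have hCS : (inner ℂ a ξ : ℂ).re ≤ t * s := by
        calc (inner ℂ a ξ : ℂ).re ≤ ‖(inner ℂ a ξ : ℂ)‖ := Complex.re_le_norm _
          _ ≤ ‖a‖ * ‖ξ‖ := norm_inner_le_norm a ξ
      have hpow : t ^ (p - 2) * t = t ^ (p - 1) := by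
        rw [← Real.rpow_add_one ht.ne']
        congr 1
        ring
      have htp2 : (0:ℝ) < t ^ (p - 2) := Real.rpow_pos_of_pos ht _
      have hbound : p * t ^ (p - 2) * (inner ℂ a η : ℂ).re ≤ p * t ^ (p - 1) * (s - t) := by
        rw [hinner]
        have h1 : (inner ℂ a ξ : ℂ).re - t ^ 2 ≤ t * (s - t) := by nlinarith
        have h2 : p * t ^ (p - 2) * ((inner ℂ a ξ : ℂ).re - t ^ 2)
            ≤ p * t ^ (p - 2) * (t * (s - t)) := by
          apply mul_le_mul_of_nonneg_left h1
          positivity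
        calc p * t ^ (p - 2) * ((inner ℂ a ξ : ℂ).re - t ^ 2)
            ≤ p * t ^ (p - 2) * (t * (s - t)) := h2
          _ = p * (t ^ (p - 2) * t) * (s - t) := by ring
          _ = p * t ^ (p - 1) * (s - t) := by rw [hpow]
      have htan : t ^ p + p * t ^ (p - 1) * (s - t) ≤ s ^ p :=
        tangent_le p s t hp hs0 ht
      -- s = t
      have hst : s = t := by
        by_contra hne
        have := tangent_lt p s t hp hs0 ht hne
        linarith
      -- then inner ℂ a η re = 0
      have hr0 : (inner ℂ a η : ℂ).re = 0 := by
        have : p * t ^ (p - 2) * (inner ℂ a η : ℂ).re = 0 := by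
          rw [hst] at hCp; linarith
        have hpne : p * t ^ (p - 2) ≠ 0 := by positivity
        exact (mul_eq_zero.mp this).resolve_left hpne
      -- ‖η‖² = s² - 2 Re⟨a,ξ⟩ + t² = 0
      have hreaxi : (inner ℂ a ξ : ℂ).re = t ^ 2 := by
        rw [hinner] at hr0; linarith
      have hnormsq : ‖η‖ ^ 2 = 0 := by
        have hexp : ‖ξ - a‖ ^ 2 = ‖ξ‖ ^ 2 - 2 * (inner ℂ a ξ : ℂ).re + ‖a‖ ^ 2 := by
          have hns := norm_sub_sq (𝕜 := ℂ) ξ a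
          simp only [RCLike.re_to_complex] at hns
          rw [hns]
          have hsym : (inner ℂ ξ a : ℂ).re = (inner ℂ a ξ : ℂ).re := by
            simpa using inner_re_symm (𝕜 := ℂ) ξ a
          rw [hsym]
        rw [hηa, hexp, hreaxi, ← hs, ← htdef, hst]
        ring
      have : ‖η‖ = 0 := by nlinarith [norm_nonneg η]
      exact norm_eq_zero.mp this
  · intro h
    subst h
    unfold Cp
    simp
end
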